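/- For every q ≥ 1, the one-point compactification OnePoint (Fin q → ℝ≥0) of the quadrant ℝ₊^q is a contractible topological space. (This is the key feature that J(n,m)⁺ ∧ Y is an iterated cone c^{n-m-1}(Y), specialized to the contractibility of the compactified morphism spaces of the category 𝒥.) -/

import Mathlib

open OnePoint Set Filter Topology unitInterval

namespace Stmt4Aux

variable (q : ℕ)

/-- The basic deformation: push `x` by `t/(1-t)` in every coordinate, sending `t = 1` to `∞`. -/
noncomputable def G : (Fin q → NNReal) × unitInterval → OnePoint (Fin q → NNReal) :=
  fun p => if (p.2 : ℝ) < 1 then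
    (fun i => p.1 i + Real.toNNReal ((p.2 : ℝ) / (1 - (p.2 : ℝ))) : Fin q → NNReal)
  else ∞

lemma continuous_G (hq : 1 ≤ q) : Continuous (G q) := by
  rw [continuous_iff_continuousAt]
  rintro ⟨x, t⟩
  rcases lt_or_ge (t : ℝ) 1 with ht | ht
  · -- on the open set `t < 1` the map agrees with a continuous map into the image of `coe`
    have hopen : IsOpen {p : (Fin q → NNReal) × unitInterval | (p.2 : ℝ) < 1} :=
      isOpen_lt (continuous_subtype_val.comp continuous_snd) continuous_const
    have hev : (fun p : (Fin q → NNReal) × unitInterval =>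
        ((fun i => p.1 i + Real.toNNReal ((p.2 : ℝ) / (1 - (p.2 : ℝ))) : Fin q → NNReal) :
          OnePoint (Fin q → NNReal))) =ᶠ[𝓝 (x, t)] G q := by
      filter_upwards [hopen.mem_nhds ht] with p hp
      simp only [G, if_pos hp]
    refine ContinuousAt.congr ?_ hev
    have hdiv : ContinuousAt (fun p : (Fin q → NNReal) × unitInterval =>
        Real.toNNReal ((p.2 : ℝ) / (1 - (p.2 : ℝ)))) (x, t) := by
      apply (continuous_real_toNNReal.continuousAt).comp
      apply ContinuousAt.div
      · exact (continuous_subtype_val.comp continuous_snd).continuousAt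
      · exact (continuous_const.sub (continuous_subtype_val.comp continuous_snd)).continuousAt
      · exact sub_ne_zero_of_ne (ne_of_lt ht).symm
    apply (OnePoint.continuous_coe).continuousAt.comp
    apply continuousAt_pi.mpr
    intro i
    exact ((continuous_apply i).comp continuous_fst).continuousAt.add hdiv
  · -- at `t = 1` the map tends to `∞`
    have hGt : G q (x, t) = ∞ := by simp [G, not_lt.mpr ht]
    rw [ContinuousAt, hGt]
    rw [OnePoint.hasBasis_nhds_infty.tendsto_right_iff]
    rintro s ⟨-, hsc⟩
    have i0 : Fin q := ⟨0, hq⟩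
    obtain ⟨M, hM⟩ : ∃ M : NNReal, ∀ y ∈ s, y i0 ≤ M := by
      obtain ⟨M, hM⟩ := (hsc.image (continuous_apply i0)).bddAbove
      exact ⟨M, fun y hy => hM ⟨y, hy, rfl⟩⟩
    have hMlt : (M : ℝ) / (M + 1) < (t : ℝ) := by
      have h1 : (M : ℝ) / (M + 1) < 1 :=
        (div_lt_one (by positivity)).mpr (by linarith [M.coe_nonneg])
      linarith
    have hopen : IsOpen {p : (Fin q → NNReal) × unitInterval | (M : ℝ) / (M + 1) < (p.2 : ℝ)} :=
      isOpen_lt continuous_const (continuous_subtype_val.comp continuous_snd)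
    filter_upwards [hopen.mem_nhds hMlt] with p hp
    by_cases hlt : (p.2 : ℝ) < 1
    · left
      have hdenom : (0 : ℝ) < 1 - (p.2 : ℝ) := by linarith
      have hMp : (M : ℝ) < (p.2 : ℝ) / (1 - (p.2 : ℝ)) := by
        rw [lt_div_iff₀ hdenom]
        have := hp
        simp only [mem_setOf_eq, div_lt_iff₀ (show (0:ℝ) < M + 1 by positivity)] at this
        nlinarith
      have hMp' : M < Real.toNNReal ((p.2 : ℝ) / (1 - (p.2 : ℝ))) :=
        Real.lt_toNNReal_iff_coe_lt.mpr hMp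
      have hval : G q p =
          ((fun i => p.1 i + Real.toNNReal ((p.2 : ℝ) / (1 - (p.2 : ℝ))) : Fin q → NNReal) :
            OnePoint (Fin q → NNReal)) := by
        simp only [G, if_pos hlt]
      rw [hval]
      refine mem_image_of_mem _ (fun hmem => absurd (hM _ hmem) (not_le.mpr ?_))
      calc M < Real.toNNReal ((p.2 : ℝ) / (1 - (p.2 : ℝ))) := hMp'
        _ ≤ p.1 i0 + Real.toNNReal ((p.2 : ℝ) / (1 - (p.2 : ℝ))) := le_add_self
    · right
      simp [G, hlt]

/-- The curried deformation as a continuous map. -/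
noncomputable def Gc (hq : 1 ≤ q) : C(Fin q → NNReal, C(unitInterval, OnePoint (Fin q → NNReal))) :=
  ContinuousMap.curry ⟨G q, continuous_G q hq⟩

/-- Extension of the deformation to the one-point compactification. -/
noncomputable def g (hq : 1 ≤ q) :
    OnePoint (Fin q → NNReal) → C(unitInterval, OnePoint (Fin q → NNReal)) :=
  fun y => y.elim (ContinuousMap.const _ ∞) (Gc q hq)

lemma continuous_g (hq : 1 ≤ q) : Continuous (g q hq) := by
  rw [OnePoint.continuous_iff]
  constructor
  · -- tendsto at infinity
    show Tendsto (fun x : Fin q → NNReal => Gc q hq x) (coclosedCompact _)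
      (𝓝 (ContinuousMap.const _ ∞))
    rw [ContinuousMap.tendsto_nhds_compactOpen]
    intro K hK U hU hmapsto
    rcases K.eq_empty_or_nonempty with rfl | ⟨t0, ht0⟩
    · exact Eventually.of_forall fun _ => mapsTo_empty _ _
    have hinf : ∞ ∈ U := hmapsto ht0
    have hUopen := (OnePoint.isOpen_iff_of_mem' hinf).mp hU
    set C : Set (Fin q → NNReal) := ((fun x : Fin q → NNReal => (x : OnePoint _)) ⁻¹' U)ᶜ
      with hC
    have hCcompact : IsCompact C := hUopen.1
    obtain ⟨M, hM⟩ : ∃ M : Fin q → NNReal, ∀ y ∈ C, ∀ i, y i ≤ M i := by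
      have : ∀ i : Fin q, ∃ m : NNReal, ∀ y ∈ C, y i ≤ m := by
        intro i
        obtain ⟨m, hm⟩ := (hCcompact.image (continuous_apply i)).bddAbove
        exact ⟨m, fun y hy => hm ⟨y, hy, rfl⟩⟩
      choose M hMi using this
      exact ⟨M, fun y hy i => hMi i y hy⟩
    have hbox : IsCompact (Icc (0 : Fin q → NNReal) M) := isCompact_Icc
    have hboxcl : IsClosed (Icc (0 : Fin q → NNReal) M) := isClosed_Icc
    rw [Filter.hasBasis_coclosedCompact.eventually_iff]
    refine ⟨Icc 0 M, ⟨hboxcl, hbox⟩, ?_⟩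
    intro x hx t _
    -- x escapes the box, so `G q (x, t)` stays in `U`
    by_cases hlt : (t : ℝ) < 1
    · have hval : Gc q hq x t =
          ((fun i => x i + Real.toNNReal ((t : ℝ) / (1 - (t : ℝ))) : Fin q → NNReal) :
            OnePoint (Fin q → NNReal)) := by
        simp only [Gc, ContinuousMap.curry_apply, ContinuousMap.coe_mk, G, if_pos hlt]
      rw [hval]
      by_contra hnot
      have hyC : (fun i => x i + Real.toNNReal ((t : ℝ) / (1 - (t : ℝ))) : Fin q → NNReal) ∈ C :=
        hnot
      apply hx
      refine ⟨fun i => zero_le, fun i => ?_⟩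
      calc x i ≤ x i + Real.toNNReal ((t : ℝ) / (1 - (t : ℝ))) := le_self_add
        _ ≤ M i := hM _ hyC i
    · have hval : Gc q hq x t = ∞ := by
        simp only [Gc, ContinuousMap.curry_apply, ContinuousMap.coe_mk, G, if_neg hlt]
      rw [hval]; exact hinf
  · exact (Gc q hq).continuous

/-- The contraction homotopy from the identity to the constant map at `∞`. -/
noncomputable def contraction (hq : 1 ≤ q) :
    ContinuousMap.Homotopy (ContinuousMap.id (OnePoint (Fin q → NNReal)))
      (ContinuousMap.const _ ∞) where
  toFun p := g q hq p.2 p.1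
  continuous_toFun := by
    have : Continuous (ContinuousMap.uncurry ⟨g q hq, continuous_g q hq⟩) :=
      (ContinuousMap.uncurry _).continuous
    exact this.comp (continuous_snd.prodMk continuous_fst)
  map_zero_left y := by
    cases y with
    | infty => rfl
    | coe x =>
      show Gc q hq x 0 = (x : OnePoint (Fin q → NNReal))
      simp [Gc, G]
  map_one_left y := by
    cases y with
    | infty => rfl
    | coe x =>
      show Gc q hq x 1 = ∞
      simp [Gc, G]

end Stmt4Aux

/-- For every `q ≥ 1`, the one-point compactification of the quadrant `ℝ₊^q`,
i.e. `OnePoint (Fin q → ℝ≥0)`, is a contractible topological space. -/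
theorem stmt4 (q : ℕ) (hq : 1 ≤ q) :
    ContractibleSpace (OnePoint (Fin q → NNReal)) := by
  rw [contractible_iff_id_nullhomotopic]
  exact ⟨∞, ⟨Stmt4Aux.contraction q hq⟩⟩
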